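/- arXiv:1108.1527 — 3 statements merged into one kernel-verified Lean document; each statement's English description precedes it below -/
import Mathlib

section
/- Let W be a real separable Banach space and μ a Borel probability measure on W whose characteristic functional satisfies ∫_W exp(i·u(x)) dμ(x) = exp(−q(u,u)/2) for every u ∈ W*, where q : W* × W* → ℝ is a symmetric positive semidefinite bilinear form. Then for every u, v ∈ W*, the function w ↦ u(w)·v(w) is μ-integrable and ∫_W u(w) v(w) dμ(w) = q(u,v). -/
open MeasureTheory Filter Topology

-- Step 1: second moment lemma
lemma second_moment
    {W : Type*} [NormedAddCommGroup W] [NormedSpace ℝ W]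
    [MeasurableSpace W] [BorelSpace W]
    (μ : Measure W) [IsProbabilityMeasure μ]
    (u : W →L[ℝ] ℝ) (σ2 : ℝ) (hσ : 0 ≤ σ2)
    (h : ∀ t : ℝ, ∫ x, Real.cos (t * u x) ∂μ = Real.exp (-(t ^ 2 * σ2) / 2)) :
    Integrable (fun w => u w * u w) μ ∧ (∫ w, u w * u w ∂μ) = σ2 := by
  have hu_cont : Continuous fun w => u w := u.continuous
  -- integrability of cosines
  have hcos_int : ∀ t : ℝ, Integrable (fun x => Real.cos (t * u x)) μ := by
    intro t
    refine (integrable_const (1 : ℝ)).mono' ?_ ?_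
    · exact (Real.continuous_cos.comp (continuous_const.mul hu_cont)).aestronglyMeasurable
    · filter_upwards with x
      simpa using Real.abs_cos_le_one _
  set f : ℕ → W → ℝ := fun n x => (n : ℝ) ^ 2 * (1 - Real.cos (u x / n)) with hf
  have hf_nonneg : ∀ n x, 0 ≤ f n x := by
    intro n x
    have h1 := Real.cos_le_one (u x / n)
    exact mul_nonneg (by positivity) (by linarith)
  have hf_le : ∀ n x, f n x ≤ (u x) ^ 2 / 2 := by
    intro n x
    rcases Nat.eq_zero_or_pos n with hn | hn
    · simp [hf, hn]; positivity
    · have h1 : 1 - Real.cos (u x / n) ≤ (u x / n) ^ 2 / 2 := by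
        have := Real.one_sub_sq_div_two_le_cos (x := u x / n)
        linarith
      have hn' : (0:ℝ) < n := by exact_mod_cast hn
      calc f n x ≤ (n : ℝ) ^ 2 * ((u x / n) ^ 2 / 2) := by
            apply mul_le_mul_of_nonneg_left h1 (by positivity)
        _ = (u x) ^ 2 / 2 := by field_simp
  -- pointwise limit of f n x
  have hf_tendsto : ∀ x, Tendsto (fun n => f n x) atTop (𝓝 ((u x) ^ 2 / 2)) := by
    intro x
    rw [← tendsto_sub_nhds_zero_iff]
    refine squeeze_zero_norm' ?_
      (tendsto_const_div_atTop_nhds_zero_nat ((u x) ^ 2 / 2 + |u x| ^ 4 * (5 / 96)))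
    have hev : ∀ᶠ n : ℕ in atTop, (1:ℝ) ≤ n ∧ |u x| ≤ n := by
        filter_upwards [eventually_ge_atTop 1,
          eventually_ge_atTop (Nat.ceil |u x|)] with n h1 h2
        exact ⟨by exact_mod_cast h1, le_trans (Nat.le_ceil _) (by exact_mod_cast h2)⟩
    filter_upwards [hev] with n ⟨hn1, hnx⟩
    have hn0 : (0:ℝ) < n := by linarith
    have habs : |u x / n| ≤ 1 := by
      rw [abs_div, abs_of_pos hn0, div_le_one hn0]; exact hnx
    have hb := Real.cos_bound habs
    have heq : f n x - (u x) ^ 2 / 2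
        = -((n:ℝ) ^ 2 * (Real.cos (u x / n) - (1 - (u x / n) ^ 2 / 2))) := by
      simp only [hf]; field_simp; ring
    rw [heq, norm_neg, norm_mul, norm_pow]
    have h2 : ‖Real.cos (u x / n) - (1 - (u x / n) ^ 2 / 2)‖ ≤ |u x / n| ^ 4 * (5/96) := hb
    calc ‖(n:ℝ)‖ ^ 2 * ‖Real.cos (u x / n) - (1 - (u x / n) ^ 2 / 2)‖
        ≤ (n:ℝ) ^ 2 * (|u x / n| ^ 4 * (5/96)) := by
          rw [Real.norm_natCast]
          exact mul_le_mul_of_nonneg_left h2 (by positivity)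
      _ = |u x| ^ 4 * (5/96) / n ^ 2 := by
          rw [abs_div, abs_of_pos hn0, div_pow]
          field_simp
      _ ≤ ((u x) ^ 2 / 2 + |u x| ^ 4 * (5 / 96)) / n := by
          rw [div_le_div_iff₀ (by positivity) hn0]
          have hn2 : (n:ℝ) ≤ (n:ℝ)^2 := by nlinarith
          have hA : (0:ℝ) ≤ |u x| ^ 4 * (5/96) := by positivity
          have hB : (0:ℝ) ≤ (u x) ^ 2 / 2 := by positivity
          nlinarith
  -- value of ∫ f n
  have hint_f : ∀ n : ℕ, n ≠ 0 →
      ∫ x, f n x ∂μ = (n : ℝ) ^ 2 * (1 - Real.exp (-(σ2 / (2 * n ^ 2)))) := by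
    intro n hn
    have hn0 : (0:ℝ) < n := by exact_mod_cast Nat.pos_of_ne_zero hn
    have h1 : ∀ x : W, ((n:ℝ))⁻¹ * u x = u x / n := fun x => by rw [inv_mul_eq_div]
    have hci : Integrable (fun x => Real.cos (u x / n)) μ := by
      simpa only [h1] using hcos_int ((n:ℝ)⁻¹)
    have hval := h ((n:ℝ)⁻¹)
    simp only [h1] at hval
    have hnne : (n:ℝ) ≠ 0 := ne_of_gt hn0
    have hexp : -(((n:ℝ)⁻¹) ^ 2 * σ2) / 2 = -(σ2 / (2 * (n:ℝ) ^ 2)) := by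
      rw [neg_div, neg_inj]
      field_simp
    rw [hexp] at hval
    simp only [hf, integral_const_mul]
    rw [integral_sub (integrable_const 1) hci, hval, integral_const, probReal_univ]
    simp
  -- integrability of f n
  have hf_int : ∀ n : ℕ, Integrable (f n) μ := by
    intro n
    refine (integrable_const ((n:ℝ)^2 * 2)).mono' ?_ ?_
    · exact ((continuous_const.mul (continuous_const.sub
        (Real.continuous_cos.comp (hu_cont.div_const _)))).aestronglyMeasurable)
    · filter_upwards with x
      have h1 := Real.cos_le_one (u x / n)
      have h2 := Real.neg_one_le_cos (u x / n)
      have h3 : |1 - Real.cos (u x / n)| ≤ 2 := by rw [abs_le]; constructor <;> linarith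
      simp only [hf, Real.norm_eq_abs, abs_mul,
        abs_of_nonneg (by positivity : (0:ℝ) ≤ (n:ℝ)^2)]
      exact mul_le_mul_of_nonneg_left h3 (by positivity)
  -- limit of ∫ f n
  have hF_tendsto : Tendsto (fun n : ℕ => ∫ x, f n x ∂μ) atTop (𝓝 (σ2 / 2)) := by
    have hg : HasDerivAt (fun t : ℝ => 1 - Real.exp (-(σ2 / 2 * t))) (σ2 / 2) 0 := by
      have h1 : HasDerivAt (fun t : ℝ => -(σ2 / 2 * t)) (-(σ2 / 2)) 0 := by
        have := ((hasDerivAt_id (0:ℝ)).const_mul (σ2 / 2)).neg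
        simp only [id_eq, mul_one] at this
        exact this
      have h2 := (Real.hasDerivAt_exp (-(σ2 / 2 * 0))).comp 0 h1
      have h3 := ((hasDerivAt_const (0:ℝ) (1:ℝ)).sub h2)
      simp only [Function.comp_apply, mul_zero, neg_zero, Real.exp_zero, one_mul, zero_sub,
        neg_neg] at h3
      exact h3
    have hslope := hasDerivAt_iff_tendsto_slope.mp hg
    have hs : Tendsto (fun n : ℕ => 1 / ((n:ℝ) ^ 2)) atTop (𝓝[≠] 0) := by
      apply tendsto_nhdsWithin_of_tendsto_nhds_of_eventually_within
      · have h2 : Tendsto (fun n : ℕ => ((n:ℝ)) ^ 2) atTop atTop :=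
          (tendsto_pow_atTop two_ne_zero).comp tendsto_natCast_atTop_atTop
        refine (h2.inv_tendsto_atTop).congr (fun n => ?_)
        simp [one_div]
      · filter_upwards [eventually_ge_atTop 1] with n hn
        have hn0 : (0:ℝ) < n := by exact_mod_cast hn
        have : (0:ℝ) < 1 / (n:ℝ)^2 := by positivity
        exact Set.mem_compl_singleton_iff.mpr (ne_of_gt this)
    have hcomp := hslope.comp hs
    apply Tendsto.congr' _ hcomp
    filter_upwards [eventually_ge_atTop 1] with n hn
    have hn0 : (0:ℝ) < n := by exact_mod_cast hn
    rw [hint_f n (by omega)]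
    have hexp : -(σ2 / 2 * (1 / (n:ℝ) ^ 2)) = -(σ2 / (2 * (n:ℝ) ^ 2)) := by ring
    simp only [Function.comp_apply, slope_def_field, hexp, mul_zero, neg_zero,
      Real.exp_zero, sub_self, sub_zero]
    field_simp
  -- Fatou: integrability of u²
  have hmeas_u2 : AEStronglyMeasurable (fun w => u w * u w) μ :=
    (hu_cont.mul hu_cont).aestronglyMeasurable
  have hfatou : ∫⁻ x, ENNReal.ofReal ((u x) ^ 2 / 2) ∂μ ≤ ENNReal.ofReal (σ2 / 2) := by
    have hml : ∀ n : ℕ, Measurable fun x => ENNReal.ofReal (f n x) := by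
      intro n
      exact (measurable_const.mul ((Real.measurable_cos.comp
        (u.measurable.div_const _)).const_sub 1)).ennreal_ofReal
    have hliminf_pt : ∀ x, (Filter.liminf (fun n => ENNReal.ofReal (f n x)) atTop)
        = ENNReal.ofReal ((u x) ^ 2 / 2) := by
      intro x
      exact ((ENNReal.continuous_ofReal.tendsto _).comp (hf_tendsto x)).liminf_eq
    calc ∫⁻ x, ENNReal.ofReal ((u x) ^ 2 / 2) ∂μ
        = ∫⁻ x, Filter.liminf (fun n => ENNReal.ofReal (f n x)) atTop ∂μ := by
          apply lintegral_congr; intro x; rw [hliminf_pt x]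
      _ ≤ Filter.liminf (fun n => ∫⁻ x, ENNReal.ofReal (f n x) ∂μ) atTop :=
          lintegral_liminf_le hml
      _ = ENNReal.ofReal (σ2 / 2) := by
          have heq : ∀ n : ℕ, ∫⁻ x, ENNReal.ofReal (f n x) ∂μ
              = ENNReal.ofReal (∫ x, f n x ∂μ) := by
            intro n
            rw [← ofReal_integral_eq_lintegral_ofReal (hf_int n)
              (Filter.Eventually.of_forall (hf_nonneg n))]
          simp only [heq]
          exact ((ENNReal.continuous_ofReal.tendsto _).comp hF_tendsto).liminf_eq
  have hint_u2 : Integrable (fun w => u w * u w) μ := by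
    refine ⟨hmeas_u2, ?_⟩
    rw [hasFiniteIntegral_iff_norm]
    have : ∀ x, ENNReal.ofReal ‖u x * u x‖ = 2 * ENNReal.ofReal ((u x) ^ 2 / 2) := by
      intro x
      rw [Real.norm_eq_abs, abs_of_nonneg (mul_self_nonneg _),
        ← ENNReal.ofReal_ofNat, ← ENNReal.ofReal_mul (by norm_num)]
      congr 1; ring
    calc ∫⁻ x, ENNReal.ofReal ‖u x * u x‖ ∂μ
        = ∫⁻ x, 2 * ENNReal.ofReal ((u x) ^ 2 / 2) ∂μ := by
          apply lintegral_congr; intro x; rw [this x]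
      _ = 2 * ∫⁻ x, ENNReal.ofReal ((u x) ^ 2 / 2) ∂μ := lintegral_const_mul 2
          (fun s hs => ((u.measurable.pow_const 2).div_const 2).ennreal_ofReal hs)
      _ ≤ 2 * ENNReal.ofReal (σ2 / 2) := by
          exact mul_le_mul_right hfatou 2
      _ < ⊤ := by
          exact ENNReal.mul_lt_top (by norm_num) ENNReal.ofReal_lt_top
  -- DCT
  have hbound_int : Integrable (fun x => (u x) ^ 2 / 2) μ := by
    have := hint_u2.div_const 2
    apply this.congr
    filter_upwards with x
    rw [sq]
  have hDCT : Tendsto (fun n : ℕ => ∫ x, f n x ∂μ) atTop (𝓝 (∫ x, (u x) ^ 2 / 2 ∂μ)) := by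
    refine tendsto_integral_of_dominated_convergence (fun x => (u x) ^ 2 / 2)
      (fun n => ((continuous_const.mul (continuous_const.sub
        (Real.continuous_cos.comp (hu_cont.div_const _)))).aestronglyMeasurable)) hbound_int
      (fun n => Filter.Eventually.of_forall fun x => ?_)
      (Filter.Eventually.of_forall fun x => hf_tendsto x)
    rw [Real.norm_eq_abs, abs_of_nonneg (hf_nonneg n x)]
    exact hf_le n x
  have hkey : ∫ x, (u x) ^ 2 / 2 ∂μ = σ2 / 2 := tendsto_nhds_unique hDCT hF_tendsto
  refine ⟨hint_u2, ?_⟩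
  have : ∫ x, (u x) ^ 2 / 2 ∂μ = (∫ x, (u x) ^ 2 ∂μ) / 2 := integral_div 2 _
  rw [this] at hkey
  have h2 : ∫ x, (u x) ^ 2 ∂μ = σ2 := by linarith
  rw [← h2]
  apply integral_congr_ae
  filter_upwards with x
  rw [sq]

/-- If `μ` is a Gaussian measure on a real separable Banach space `W`, i.e. its
characteristic functional is given by `∫ exp(i u(x)) dμ = exp(-q(u,u)/2)` for a
symmetric positive semidefinite bilinear form `q` on the dual, then for all
continuous linear functionals `u v`, the product `u·v` is `μ`-integrable and
`∫ u(w) v(w) dμ(w) = q(u,v)`. -/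
theorem gaussian_covariance
    {W : Type*} [NormedAddCommGroup W] [NormedSpace ℝ W] [CompleteSpace W]
    [TopologicalSpace.SeparableSpace W]
    [MeasurableSpace W] [BorelSpace W]
    (μ : Measure W) [IsProbabilityMeasure μ]
    (q : (W →L[ℝ] ℝ) → (W →L[ℝ] ℝ) → ℝ)
    (hq_symm : ∀ u v, q u v = q v u)
    (hq_add : ∀ u₁ u₂ v, q (u₁ + u₂) v = q u₁ v + q u₂ v)
    (hq_smul : ∀ (c : ℝ) (u v), q (c • u) v = c * q u v)
    (hq_pos : ∀ u, 0 ≤ q u u)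
    (hchar : ∀ u : W →L[ℝ] ℝ,
      ∫ x, Complex.exp (Complex.I * (u x : ℂ)) ∂μ = Complex.exp (-(q u u : ℂ) / 2)) :
    ∀ u v : W →L[ℝ] ℝ,
      Integrable (fun w => u w * v w) μ ∧ (∫ w, u w * v w ∂μ) = q u v := by
  -- cosine form of the characteristic functional
  have hcos : ∀ (u : W →L[ℝ] ℝ) (t : ℝ),
      ∫ x, Real.cos (t * u x) ∂μ = Real.exp (-(t ^ 2 * q u u) / 2) := by
    intro u t
    have hqt : q (t • u) (t • u) = t ^ 2 * q u u := by
      rw [hq_smul, hq_symm, hq_smul, hq_symm]; ring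
    have hC := hchar (t • u)
    simp only [ContinuousLinearMap.smul_apply, smul_eq_mul, hqt] at hC
    have hexp_int : Integrable (fun x => Complex.exp (Complex.I * ((t * u x : ℝ) : ℂ))) μ := by
      refine (integrable_const (1 : ℝ)).mono' ?_ ?_
      · apply Continuous.aestronglyMeasurable
        exact Complex.continuous_exp.comp (continuous_const.mul
          (Complex.continuous_ofReal.comp (continuous_const.mul u.continuous)))
      · filter_upwards with x
        rw [Complex.norm_exp]
        simp
    have hre := integral_re hexp_int
    rw [RCLike.re_eq_complex_re] at hre
    have h1 : ∀ x : W, ((Complex.exp (Complex.I * ((t * u x : ℝ) : ℂ))).re)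
        = Real.cos (t * u x) := by
      intro x
      simp [Complex.exp_re]
    simp only [RCLike.re_eq_complex_re, h1] at hre
    rw [hre, hC]
    have h2 : (-(↑(t ^ 2 * q u u) : ℂ) / 2) = ((-(t ^ 2 * q u u) / 2 : ℝ) : ℂ) := by
      push_cast; ring
    rw [h2, Complex.exp_ofReal_re]
  have key : ∀ u : W →L[ℝ] ℝ,
      Integrable (fun w => u w * u w) μ ∧ (∫ w, u w * u w ∂μ) = q u u := fun u =>
    second_moment μ u (q u u) (hq_pos u) (hcos u)
  intro u v
  obtain ⟨Iu, Eu⟩ := key u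
  obtain ⟨Iv, Ev⟩ := key v
  obtain ⟨Iuv, Euv⟩ := key (u + v)
  simp only [ContinuousLinearMap.add_apply] at Iuv Euv
  have hq_uv : q (u + v) (u + v) = q u u + 2 * q u v + q v v := by
    have e1 : q u (u + v) = q u u + q u v := by
      rw [hq_symm, hq_add, hq_symm u u, hq_symm v u]  -- careful
    have e2 : q v (u + v) = q u v + q v v := by
      rw [hq_symm, hq_add, hq_symm v v]
    rw [hq_add, e1, e2]; ring
  have heqfun : ∀ w : W, u w * v w
      = ((u w + v w) * (u w + v w) - u w * u w - v w * v w) / 2 := by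
    intro w; ring
  have hI2 : Integrable (fun w => ((u w + v w) * (u w + v w) - u w * u w - v w * v w) / 2) μ :=
    ((Iuv.sub Iu).sub Iv).div_const 2
  constructor
  · exact hI2.congr (Filter.Eventually.of_forall fun w => (heqfun w).symm)
  · have : ∫ w, u w * v w ∂μ
        = ∫ w, ((u w + v w) * (u w + v w) - u w * u w - v w * v w) / 2 ∂μ :=
      integral_congr_ae (Filter.Eventually.of_forall heqfun)
    have hsplit : ∫ w, (u w + v w) * (u w + v w) - u w * u w - v w * v w ∂μ
        = (∫ w, (u w + v w) * (u w + v w) ∂μ) - (∫ w, u w * u w ∂μ)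
          - ∫ w, v w * v w ∂μ := by
      have IA : Integrable (fun w => (u w + v w) * (u w + v w) - u w * u w) μ := by
        exact Iuv.sub Iu
      rw [integral_sub IA Iv, integral_sub Iuv Iu]
    rw [this, integral_div, hsplit, Euv, Eu, Ev, hq_uv]
    ring
end

section
/- Let ρ : W × W → K be a continuous bilinear map with norm ‖ρ‖₀ := sup{‖ρ(w,w')‖_K : ‖w‖_W = ‖w'‖_W = 1}, and let C₂ := ∫_W ‖w‖²_W dμ(w). Then Σ_{i=1}^∞ Σ_{j=1}^∞ ‖ρ(e_i,e_j)‖²_K ≤ C₂² · ‖ρ‖₀²; in particular the double series is finite, i.e. ρ is Hilbert–Schmidt along (e_j). -/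
open MeasureTheory

section Aux

variable {W : Type*} [NormedAddCommGroup W] [NormedSpace ℝ W]
    [TopologicalSpace.SeparableSpace W] [MeasurableSpace W] [BorelSpace W]
    {K : Type*} [NormedAddCommGroup K] [InnerProductSpace ℝ K] [FiniteDimensional ℝ K]
    (μ : Measure W) [IsProbabilityMeasure μ]

/-- A continuous function dominated by `c * ‖w‖^2` is integrable when `∫ ‖w‖^2 < ∞`. -/
lemma aux_integrable (hμ2 : Integrable (fun w => ‖w‖ ^ 2) μ)
    {f : W → ℝ} (hf : Continuous f) (c : ℝ) (h : ∀ w, ‖f w‖ ≤ c * ‖w‖ ^ 2) :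
    Integrable f μ := by
  refine (hμ2.const_mul c).mono' hf.aestronglyMeasurable (ae_of_all _ fun w => ?_)
  simpa using h w

/-- Key lemma: for a continuous linear map `T : W → K`, the sum of `‖T (e j)‖²`
is the integral of `‖T w‖²`. -/
lemma key_lemma (hμ2 : Integrable (fun w => ‖w‖ ^ 2) μ)
    (e : ℕ → W)
    (he : ∀ u : W →L[ℝ] ℝ,
      Summable (fun j => (u (e j)) ^ 2) ∧ (∫ w, (u w) ^ 2 ∂μ) = ∑' j, (u (e j)) ^ 2)
    (T : W →L[ℝ] K) :
    Summable (fun j => ‖T (e j)‖ ^ 2) ∧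
      (∑' j, ‖T (e j)‖ ^ 2) = ∫ w, ‖T w‖ ^ 2 ∂μ := by
  set b := stdOrthonormalBasis ℝ K with hb
  -- the coordinate functionals
  set u : Fin (Module.finrank ℝ K) → (W →L[ℝ] ℝ) :=
    fun k => (innerSL ℝ (b k)).comp T with hu
  have hnorm : ∀ x : W, ‖T x‖ ^ 2 = ∑ k, (u k x) ^ 2 := by
    intro x
    have := b.sum_inner_mul_inner (T x) (T x)
    rw [real_inner_self_eq_norm_sq] at this
    rw [← this]
    refine Finset.sum_congr rfl fun k _ => ?_
    simp only [hu, ContinuousLinearMap.comp_apply, innerSL_apply_apply, sq]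
    rw [real_inner_comm]
  have hsum : ∀ k, Summable (fun j => (u k (e j)) ^ 2) := fun k => (he (u k)).1
  have hsummable : Summable (fun j => ‖T (e j)‖ ^ 2) := by
    have : Summable (fun j => ∑ k, (u k (e j)) ^ 2) :=
      summable_sum fun k _ => hsum k
    exact this.congr fun j => (hnorm (e j)).symm
  refine ⟨hsummable, ?_⟩
  have hint : ∀ k, Integrable (fun w => (u k w) ^ 2) μ := by
    intro k
    refine aux_integrable μ hμ2 ((u k).continuous.pow 2) (‖u k‖ ^ 2) fun w => ?_
    have h1 : ‖u k w‖ ≤ ‖u k‖ * ‖w‖ := (u k).le_opNorm w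
    calc ‖(u k w) ^ 2‖ = ‖u k w‖ ^ 2 := by
          rw [Real.norm_eq_abs, abs_pow, Real.norm_eq_abs]
      _ ≤ (‖u k‖ * ‖w‖) ^ 2 := by
          exact pow_le_pow_left₀ (norm_nonneg _) h1 2
      _ = ‖u k‖ ^ 2 * ‖w‖ ^ 2 := by ring
  calc (∑' j, ‖T (e j)‖ ^ 2) = ∑' j, ∑ k, (u k (e j)) ^ 2 := by
        exact tsum_congr fun j => hnorm (e j)
    _ = ∑ k, ∑' j, (u k (e j)) ^ 2 := Summable.tsum_finsetSum fun k _ => hsum k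
    _ = ∑ k, ∫ w, (u k w) ^ 2 ∂μ := by
        exact Finset.sum_congr rfl fun k _ => ((he (u k)).2).symm
    _ = ∫ w, ∑ k, (u k w) ^ 2 ∂μ := (integral_finset_sum _ fun k _ => hint k).symm
    _ = ∫ w, ‖T w‖ ^ 2 ∂μ := by
        exact integral_congr_ae (ae_of_all _ fun w => (hnorm w).symm)

end Aux

/-- In the setting of an abstract Wiener space `(W, H, μ)` with orthonormal basis
`(e_j)` of the Cameron–Martin space, every continuous bilinear map
`ρ : W × W → K` into a finite-dimensional inner product space is Hilbert–Schmidt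
along `(e_j)`: `Σ_{i,j} ‖ρ(e_i,e_j)‖² ≤ C₂² ‖ρ‖₀²` where `C₂ = ∫ ‖w‖² dμ` and
`‖ρ‖₀` is the operator norm of `ρ`. -/
theorem continuousBilinearMap_hilbertSchmidt
    {W : Type*} [NormedAddCommGroup W] [NormedSpace ℝ W]
    [TopologicalSpace.SeparableSpace W] [MeasurableSpace W] [BorelSpace W]
    {K : Type*} [NormedAddCommGroup K] [InnerProductSpace ℝ K] [FiniteDimensional ℝ K]
    (μ : Measure W) [IsProbabilityMeasure μ]
    (hμ2 : Integrable (fun w => ‖w‖ ^ 2) μ)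
    (e : ℕ → W)
    (he : ∀ u : W →L[ℝ] ℝ,
      Summable (fun j => (u (e j)) ^ 2) ∧ (∫ w, (u w) ^ 2 ∂μ) = ∑' j, (u (e j)) ^ 2)
    (ρ : W →L[ℝ] W →L[ℝ] K) :
    Summable (fun p : ℕ × ℕ => ‖ρ (e p.1) (e p.2)‖ ^ 2) ∧
      (∑' i : ℕ, ∑' j : ℕ, ‖ρ (e i) (e j)‖ ^ 2) ≤ (∫ w, ‖w‖ ^ 2 ∂μ) ^ 2 * ‖ρ‖ ^ 2 := by
  set C2 : ℝ := ∫ w, ‖w‖ ^ 2 ∂μ with hC2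
  have hC2nn : 0 ≤ C2 := integral_nonneg fun w => sq_nonneg _
  -- Step A: for each i, the inner sum equals an integral
  have stepA : ∀ i, Summable (fun j => ‖ρ (e i) (e j)‖ ^ 2) ∧
      (∑' j, ‖ρ (e i) (e j)‖ ^ 2) = ∫ w, ‖ρ (e i) w‖ ^ 2 ∂μ :=
    fun i => key_lemma μ hμ2 e he (ρ (e i))
  -- Step B: for each w', the sum over i equals an integral
  have stepB : ∀ w' : W, Summable (fun i => ‖ρ (e i) w'‖ ^ 2) ∧
      (∑' i, ‖ρ (e i) w'‖ ^ 2) = ∫ w, ‖ρ w w'‖ ^ 2 ∂μ := by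
    intro w'
    have := key_lemma μ hμ2 e he (ρ.flip w')
    simpa using this
  -- pointwise bound for the bilinear map
  have hpt : ∀ w w' : W, ‖ρ w w'‖ ^ 2 ≤ ‖ρ‖ ^ 2 * ‖w‖ ^ 2 * ‖w'‖ ^ 2 := by
    intro w w'
    have h1 : ‖ρ w w'‖ ≤ ‖ρ‖ * ‖w‖ * ‖w'‖ := ρ.le_opNorm₂ w w'
    calc ‖ρ w w'‖ ^ 2 ≤ (‖ρ‖ * ‖w‖ * ‖w'‖) ^ 2 :=
          pow_le_pow_left₀ (norm_nonneg _) h1 2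
      _ = ‖ρ‖ ^ 2 * ‖w‖ ^ 2 * ‖w'‖ ^ 2 := by ring
  -- bound on ∫ ‖ρ w w'‖² for fixed w'
  have hbound : ∀ w' : W, (∫ w, ‖ρ w w'‖ ^ 2 ∂μ) ≤ ‖ρ‖ ^ 2 * ‖w'‖ ^ 2 * C2 := by
    intro w'
    have hintL : Integrable (fun w => ‖ρ w w'‖ ^ 2) μ := by
      refine aux_integrable μ hμ2 (by continuity) (‖ρ‖ ^ 2 * ‖w'‖ ^ 2) fun w => ?_
      have := hpt w w'
      rw [Real.norm_eq_abs, abs_of_nonneg (sq_nonneg _)]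
      linarith
    have hintR : Integrable (fun w => ‖ρ‖ ^ 2 * ‖w'‖ ^ 2 * ‖w‖ ^ 2) μ :=
      hμ2.const_mul _
    calc (∫ w, ‖ρ w w'‖ ^ 2 ∂μ) ≤ ∫ w, ‖ρ‖ ^ 2 * ‖w'‖ ^ 2 * ‖w‖ ^ 2 ∂μ := by
          refine integral_mono hintL hintR fun w => ?_
          have := hpt w w'
          linarith
      _ = ‖ρ‖ ^ 2 * ‖w'‖ ^ 2 * C2 := by rw [integral_const_mul]
  -- integrability of each fun w' => ‖ρ (e i) w'‖²
  have hinti : ∀ i, Integrable (fun w' => ‖ρ (e i) w'‖ ^ 2) μ := by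
    intro i
    refine aux_integrable μ hμ2 (by continuity) (‖ρ (e i)‖ ^ 2) fun w' => ?_
    rw [Real.norm_eq_abs, abs_of_nonneg (sq_nonneg _)]
    calc ‖ρ (e i) w'‖ ^ 2 ≤ (‖ρ (e i)‖ * ‖w'‖) ^ 2 :=
          pow_le_pow_left₀ (norm_nonneg _) ((ρ (e i)).le_opNorm w') 2
      _ = ‖ρ (e i)‖ ^ 2 * ‖w'‖ ^ 2 := by ring
  -- partial sums of the outer series are bounded
  have hpartial : ∀ n : ℕ,
      (∑ i ∈ Finset.range n, ∑' j, ‖ρ (e i) (e j)‖ ^ 2) ≤ C2 ^ 2 * ‖ρ‖ ^ 2 := by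
    intro n
    have h1 : (∑ i ∈ Finset.range n, ∑' j, ‖ρ (e i) (e j)‖ ^ 2)
        = ∫ w', ∑ i ∈ Finset.range n, ‖ρ (e i) w'‖ ^ 2 ∂μ := by
      rw [integral_finset_sum _ fun i _ => hinti i]
      exact Finset.sum_congr rfl fun i _ => (stepA i).2
    rw [h1]
    have hintR : Integrable (fun w' => ‖ρ‖ ^ 2 * C2 * ‖w'‖ ^ 2) μ := hμ2.const_mul _
    have hintL : Integrable (fun w' => ∑ i ∈ Finset.range n, ‖ρ (e i) w'‖ ^ 2) μ :=
      integrable_finset_sum _ fun i _ => hinti i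
    calc (∫ w', ∑ i ∈ Finset.range n, ‖ρ (e i) w'‖ ^ 2 ∂μ)
        ≤ ∫ w', ‖ρ‖ ^ 2 * C2 * ‖w'‖ ^ 2 ∂μ := by
          refine integral_mono hintL hintR fun w' => ?_
          have h2 : (∑ i ∈ Finset.range n, ‖ρ (e i) w'‖ ^ 2)
              ≤ ∑' i, ‖ρ (e i) w'‖ ^ 2 :=
            Summable.sum_le_tsum _ (fun i _ => sq_nonneg _) (stepB w').1
          have h3 := (stepB w').2
          have h4 := hbound w'
          calc (∑ i ∈ Finset.range n, ‖ρ (e i) w'‖ ^ 2)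
              ≤ ∑' i, ‖ρ (e i) w'‖ ^ 2 := h2
            _ = ∫ w, ‖ρ w w'‖ ^ 2 ∂μ := h3
            _ ≤ ‖ρ‖ ^ 2 * ‖w'‖ ^ 2 * C2 := h4
            _ = ‖ρ‖ ^ 2 * C2 * ‖w'‖ ^ 2 := by ring
      _ = ‖ρ‖ ^ 2 * C2 * C2 := by rw [integral_const_mul]
      _ = C2 ^ 2 * ‖ρ‖ ^ 2 := by ring
  have houter : Summable (fun i => ∑' j, ‖ρ (e i) (e j)‖ ^ 2) :=
    summable_of_sum_range_le (fun i => tsum_nonneg fun j => sq_nonneg _) hpartial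
  constructor
  · exact (summable_prod_of_nonneg fun p => sq_nonneg _).2
      ⟨fun i => (stepA i).1, houter⟩
  · exact Real.tsum_le_of_sum_range_le
      (fun i => tsum_nonneg fun j => sq_nonneg _) hpartial
end

section
/- Let f : W × 𝐂 → ℝ be twice continuously Fréchet differentiable. For h = (A,a) and k = (B,b) in W × 𝐂, ( h̃(k̃ f) − k̃(h̃ f) )(w,c) = f'(w,c)(0, ω(A,B)) for all (w,c) ∈ W × 𝐂. In other words, the commutator of the left-invariant derivative operators h̃ and k̃ is the left-invariant derivative along the Lie bracket [h,k] = (0, ω(A,B)). -/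
/-- The left-invariant derivative on the Heisenberg-like group `G = W × 𝐂` along
`h = (A, a)`: `(h̃ f)(w,c) = f'(w,c)(A, a + ½ ω(w,A))`. -/
noncomputable def liftDeriv {W C : Type*} [NormedAddCommGroup W] [NormedSpace ℝ W]
    [NormedAddCommGroup C] [NormedSpace ℝ C]
    (ω : W →L[ℝ] W →L[ℝ] C) (h : W × C) (f : W × C → ℝ) : W × C → ℝ :=
  fun x => fderiv ℝ f x (h.1, h.2 + (1 / 2 : ℝ) • ω x.1 h.1)

lemma liftDeriv_liftDeriv {W C : Type*} [NormedAddCommGroup W] [NormedSpace ℝ W]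
    [NormedAddCommGroup C] [NormedSpace ℝ C]
    (ω : W →L[ℝ] W →L[ℝ] C)
    (f : W × C → ℝ) (hf : ContDiff ℝ 2 f)
    (A B : W) (a b : C) (x : W × C) :
    liftDeriv ω (A, a) (liftDeriv ω (B, b) f) x
      = fderiv ℝ (fderiv ℝ f) x (A, a + (1 / 2 : ℝ) • ω x.1 A)
          (B, b + (1 / 2 : ℝ) • ω x.1 B)
        + fderiv ℝ f x (0, (1 / 2 : ℝ) • ω A B) := by
  have hf1 : ContDiff ℝ 1 (fderiv ℝ f) := hf.fderiv_right (le_refl 2)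
  have hdf' : HasFDerivAt (fderiv ℝ f) (fderiv ℝ (fderiv ℝ f) x) x :=
    (hf1.differentiable (by norm_num) x).hasFDerivAt
  -- the inner function y ↦ (B, b + ½ ω y.1 B) and its derivative
  set gB : W × C → W × C := fun y => (B, b + (1 / 2 : ℝ) • ω y.1 B) with hgB
  set GB : W × C →L[ℝ] W × C :=
    ContinuousLinearMap.prod 0
      ((1 / 2 : ℝ) • ((ω.flip B).comp (ContinuousLinearMap.fst ℝ W C))) with hGB
  have hgB' : HasFDerivAt gB GB x := by
    apply HasFDerivAt.prodMk (hasFDerivAt_const B x)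
    have : HasFDerivAt (fun y : W × C => (1 / 2 : ℝ) • ω y.1 B)
        ((1 / 2 : ℝ) • ((ω.flip B).comp (ContinuousLinearMap.fst ℝ W C))) x :=
      (((ω.flip B).comp (ContinuousLinearMap.fst ℝ W C)).hasFDerivAt).const_smul (1 / 2 : ℝ)
    simpa using this
  have hmain : HasFDerivAt (liftDeriv ω (B, b) f)
      ((fderiv ℝ f x).comp GB + (fderiv ℝ (fderiv ℝ f) x).flip (gB x)) x := by
    have := hdf'.clm_apply hgB'
    exact this
  simp only [liftDeriv, hmain.fderiv]
  simp only [ContinuousLinearMap.add_apply, ContinuousLinearMap.coe_comp', Function.comp_apply,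
    ContinuousLinearMap.flip_apply, hGB, ContinuousLinearMap.prod_apply,
    ContinuousLinearMap.zero_apply, ContinuousLinearMap.coe_smul', Pi.smul_apply,
    ContinuousLinearMap.coe_fst', hgB]
  ring

/-- For a twice continuously Fréchet differentiable `f : W × 𝐂 → ℝ` and
`h = (A,a)`, `k = (B,b)`, the commutator of the left-invariant derivatives
satisfies `(h̃(k̃ f) − k̃(h̃ f))(x) = f'(x)(0, ω(A,B))`, i.e. it is the
left-invariant derivative along the Lie bracket `[h,k] = (0, ω(A,B))`. -/
theorem liftDeriv_commutator {W C : Type*} [NormedAddCommGroup W] [NormedSpace ℝ W]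
    [NormedAddCommGroup C] [InnerProductSpace ℝ C] [FiniteDimensional ℝ C]
    (ω : W →L[ℝ] W →L[ℝ] C)
    (hskew : ∀ w w' : W, ω w w' = -ω w' w)
    (f : W × C → ℝ) (hf : ContDiff ℝ 2 f)
    (A B : W) (a b : C) (x : W × C) :
    liftDeriv ω (A, a) (liftDeriv ω (B, b) f) x
        - liftDeriv ω (B, b) (liftDeriv ω (A, a) f) x
      = fderiv ℝ f x (0, ω A B) := by
  rw [liftDeriv_liftDeriv ω f hf A B a b x, liftDeriv_liftDeriv ω f hf B A b a x]
  have hdf : ∀ y, HasFDerivAt f (fderiv ℝ f y) y := fun y =>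
    (hf.differentiable (by norm_num) y).hasFDerivAt
  have hdf' : HasFDerivAt (fderiv ℝ f) (fderiv ℝ (fderiv ℝ f) x) x :=
    ((hf.fderiv_right (le_refl 2)).differentiable one_ne_zero x).hasFDerivAt
  have hsymm := second_derivative_symmetric hdf hdf'
    (A, a + (1 / 2 : ℝ) • ω x.1 A) (B, b + (1 / 2 : ℝ) • ω x.1 B)
  rw [hsymm]
  have : ((0 : W), ω A B) =
      ((0 : W), (1 / 2 : ℝ) • ω A B) - ((0 : W), (1 / 2 : ℝ) • ω B A) := by
    rw [hskew B A, Prod.mk_sub_mk]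
    refine Prod.ext (by simp) ?_
    simp only [smul_neg, sub_neg_eq_add]
    module
  rw [this, map_sub]
  ring
end
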